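/- arXiv:1810.09086 — 3 statements merged into one kernel-verified Lean document; each statement's English description precedes it below -/
import Mathlib

section
/- Let N ≥ 1, 0 < b < 2 and σ = (2−b)/N (mass-critical case). Let v ∈ H¹(ℝᴺ;ℂ) with ‖v‖_{L²}^{(4−2b)/N} ≤ (N+2−b)/(N·K_opt) (equivalently, ‖v‖_{L²} ≤ ‖Q‖_{L²}), and let θ : ℝᴺ → ℝ be differentiable with |v|·|∇θ| ∈ L²(ℝᴺ). Then |∫_{ℝᴺ} Im(v·∇v̄)·∇θ dx|² ≤ 2·E[v]·∫_{ℝᴺ} |v|²|∇θ|² dx. -/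
open MeasureTheory Filter Topology

noncomputable section

abbrev RN (N : ℕ) := EuclideanSpace ℝ (Fin N)

/-- The `i`-th partial derivative of `u` at `x`. -/
def egrad {N : ℕ} (u : RN N → ℂ) (x : RN N) (i : Fin N) : ℂ :=
  fderiv ℝ u x (EuclideanSpace.single i 1)

/-- `|∇u(x)|²`. -/
def gradNormSq {N : ℕ} (u : RN N → ℂ) (x : RN N) : ℝ :=
  ∑ i, ‖egrad u x i‖ ^ 2

/-- Membership in (a classical version of) `H¹(ℝᴺ; ℂ)`. -/
def InH1 {N : ℕ} (u : RN N → ℂ) : Prop :=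
  MemLp u 2 (volume : Measure (RN N)) ∧ Differentiable ℝ u ∧ Integrable (gradNormSq u)

def L2sq {N : ℕ} (u : RN N → ℂ) : ℝ := ∫ x, ‖u x‖ ^ 2
def L2norm {N : ℕ} (u : RN N → ℂ) : ℝ := Real.sqrt (L2sq u)
def gradL2sq {N : ℕ} (u : RN N → ℂ) : ℝ := ∫ x, gradNormSq u x
def gradL2norm {N : ℕ} (u : RN N → ℂ) : ℝ := Real.sqrt (gradL2sq u)

/-- `∫ |x|^{-b} |u|^{2σ+2}`. -/
def potential {N : ℕ} (b σ : ℝ) (u : RN N → ℂ) : ℝ :=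
  ∫ x : RN N, ‖x‖ ^ (-b) * ‖u x‖ ^ (2*σ+2)

/-- The INLS energy. -/
def energy {N : ℕ} (b σ : ℝ) (u : RN N → ℂ) : ℝ :=
  1/2 * gradL2sq u - 1/(2*σ+2) * potential b σ u

/-- The sharp Gagliardo–Nirenberg constant. -/
def Kopt (N : ℕ) (b σ : ℝ) : ℝ :=
  sSup { r : ℝ | ∃ u : RN N → ℂ, InH1 u ∧ u ≠ 0 ∧
    r = potential b σ u /
      (gradL2norm u ^ ((N:ℝ)*σ + b) * L2norm u ^ (2*σ+2 - ((N:ℝ)*σ+b))) }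

/-- Radial functions. -/
def IsRadial {N : ℕ} {α : Type*} (f : RN N → α) : Prop :=
  ∀ x y : RN N, ‖x‖ = ‖y‖ → f x = f y

section Aux

variable {N : ℕ}

lemma eucl_decomp (x : RN N) : x = ∑ i, x i • EuclideanSpace.single i 1 := by
  ext j; rw [WithLp.ofLp_sum, Finset.sum_apply]; simp [EuclideanSpace.single_apply]

lemma clm_decomp (f : RN N →L[ℝ] ℂ) (x : RN N) :
    f x = ∑ i, x i • f (EuclideanSpace.single i 1) := by
  conv_lhs => rw [eucl_decomp x]
  simp [map_sum]

lemma eucl_norm_sq (x : RN N) : ‖x‖^2 = ∑ i, (x i)^2 := by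
  rw [← real_inner_self_eq_norm_sq]
  simp only [PiLp.inner_apply, RCLike.inner_apply, conj_trivial]
  ring_nf

lemma gradient_apply (θ : RN N → ℝ) (x : RN N) (i : Fin N) :
    gradient θ x i = fderiv ℝ θ x (EuclideanSpace.single i 1) := by
  have h : inner ℝ (gradient θ x) (EuclideanSpace.single i (1:ℝ))
      = fderiv ℝ θ x (EuclideanSpace.single i 1) := by
    simp [gradient, InnerProductSpace.toDual_symm_apply]
  rw [← h, EuclideanSpace.inner_single_right]
  simp

lemma gradL2sq_nonneg' : True := trivial
lemma gradNormSq_nonneg (u : RN N → ℂ) (x : RN N) : 0 ≤ gradNormSq u x :=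
  Finset.sum_nonneg fun _ _ => sq_nonneg _

lemma gradL2sq_nonneg (u : RN N → ℂ) : 0 ≤ gradL2sq u :=
  integral_nonneg fun x => gradNormSq_nonneg u x

def uu (v : RN N → ℂ) (θ : RN N → ℝ) (l : ℝ) : RN N → ℂ :=
  fun x => Complex.exp (((l * θ x : ℝ) : ℂ) * Complex.I) * v x

variable {v : RN N → ℂ} {θ : RN N → ℝ}

lemma uu_hasFDerivAt (hv : Differentiable ℝ v) (hθ : Differentiable ℝ θ) (l : ℝ) (x : RN N) :
    HasFDerivAt (uu v θ l)
      (Complex.exp (((l * θ x : ℝ) : ℂ) * Complex.I) • fderiv ℝ v x +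
        v x • (Complex.exp (((l * θ x : ℝ) : ℂ) * Complex.I) •
          (Complex.I • (Complex.ofRealCLM.comp (l • fderiv ℝ θ x))))) x := by
  have h1 : HasFDerivAt (fun y => ((l * θ y : ℝ) : ℂ))
      (Complex.ofRealCLM.comp (l • fderiv ℝ θ x)) x :=
    Complex.ofRealCLM.hasFDerivAt.comp x (((hθ x).hasFDerivAt).const_mul l)
  have h3 : HasFDerivAt (fun y => Complex.exp (((l * θ y : ℝ) : ℂ) * Complex.I))
      (Complex.exp (((l * θ x : ℝ) : ℂ) * Complex.I) •
        (Complex.I • (Complex.ofRealCLM.comp (l • fderiv ℝ θ x)))) x := (h1.mul_const _).cexp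
  exact h3.mul (hv x).hasFDerivAt

lemma uu_differentiable (hv : Differentiable ℝ v) (hθ : Differentiable ℝ θ) (l : ℝ) :
    Differentiable ℝ (uu v θ l) :=
  fun x => (uu_hasFDerivAt hv hθ l x).differentiableAt

lemma uu_fderiv_apply (hv : Differentiable ℝ v) (hθ : Differentiable ℝ θ) (l : ℝ) (x w : RN N) :
    fderiv ℝ (uu v θ l) x w
      = Complex.exp (((l * θ x : ℝ) : ℂ) * Complex.I) *
        (fderiv ℝ v x w + ((l * fderiv ℝ θ x w : ℝ) : ℂ) * Complex.I * v x) := by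
  rw [(uu_hasFDerivAt hv hθ l x).fderiv]
  simp [smul_smul]
  ring

lemma norm_key (r t : ℝ) (a c : ℂ) :
    ‖Complex.exp ((r:ℂ) * Complex.I) * (a + (t:ℂ) * Complex.I * c)‖^2
      = ‖a‖^2 + t^2*‖c‖^2 - 2*t*(c * star a).im := by
  rw [norm_mul, Complex.norm_exp, mul_pow]
  simp only [Complex.mul_re, Complex.ofReal_re, Complex.I_re, Complex.ofReal_im, Complex.I_im]
  rw [show r * 0 - 0 * 1 = 0 by ring, Real.exp_zero, one_pow, one_mul]
  rw [
    Complex.sq_norm, Complex.sq_norm, Complex.sq_norm]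
  simp [Complex.normSq_apply, Complex.mul_im]
  ring

lemma uu_norm (l : ℝ) (x : RN N) : ‖uu v θ l x‖ = ‖v x‖ := by
  rw [uu, norm_mul, Complex.norm_exp]
  simp only [Complex.mul_re, Complex.ofReal_re, Complex.I_re, Complex.ofReal_im, Complex.I_im]
  rw [show (l * θ x) * 0 - 0 * 1 = 0 by ring, Real.exp_zero, one_mul]

lemma gradNormSq_uu (hv : Differentiable ℝ v) (hθ : Differentiable ℝ θ) (l : ℝ) (x : RN N) :
    gradNormSq (uu v θ l) x = gradNormSq v x + l^2 * (‖v x‖^2 * ‖gradient θ x‖^2)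
      - 2*l*(v x * star (fderiv ℝ v x (gradient θ x))).im := by
  have hterm : ∀ i, ‖egrad (uu v θ l) x i‖^2
      = ‖egrad v x i‖^2 + l^2 * (gradient θ x i)^2 * ‖v x‖^2
        - 2*l*(gradient θ x i)*(v x * star (egrad v x i)).im := by
    intro i
    simp only [egrad]
    rw [uu_fderiv_apply hv hθ l x]
    rw [show ((l * fderiv ℝ θ x (EuclideanSpace.single i 1) : ℝ) : ℂ)
        = ((l * gradient θ x i : ℝ) : ℂ) by rw [gradient_apply]]
    rw [norm_key (l * θ x) (l * gradient θ x i) (fderiv ℝ v x (EuclideanSpace.single i 1)) (v x)]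
    ring
  have hsum1 : ∑ i, (gradient θ x i)^2 = ‖gradient θ x‖^2 := (eucl_norm_sq _).symm
  have hW : fderiv ℝ v x (gradient θ x) = ∑ i, gradient θ x i • egrad v x i :=
    clm_decomp (fderiv ℝ v x) (gradient θ x)
  have hsum2 : (v x * star (fderiv ℝ v x (gradient θ x))).im
      = ∑ i, gradient θ x i * (v x * star (egrad v x i)).im := by
    rw [hW]
    rw [star_sum]
    simp only [star_smul, star_trivial]
    rw [Finset.mul_sum]
    rw [Complex.im_sum]
    congr 1; ext i
    rw [mul_smul_comm]
    simp [Complex.real_smul, Complex.mul_im]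
  rw [gradNormSq]
  simp only [hterm]
  rw [Finset.sum_sub_distrib, Finset.sum_add_distrib, hsum2, Finset.mul_sum, ← hsum1,
    Finset.mul_sum, Finset.mul_sum]
  rw [gradNormSq]
  congr 1
  · congr 1
    · congr 1; ext i; ring
  · congr 1; ext i; ring

lemma gradient_measurable (θ : RN N → ℝ) : Measurable (fun x => gradient θ x) := by
  have : Continuous fun f : RN N →L[ℝ] ℝ => (InnerProductSpace.toDual ℝ (RN N)).symm f :=
    (InnerProductSpace.toDual ℝ (RN N)).symm.continuous
  exact this.measurable.comp (measurable_fderiv ℝ θ)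

lemma W_measurable (v : RN N → ℂ) (θ : RN N → ℝ) :
    Measurable (fun x => fderiv ℝ v x (gradient θ x)) := by
  have h1 : Measurable (fun x => (fderiv ℝ v x, gradient θ x)) :=
    (measurable_fderiv ℝ v).prodMk (gradient_measurable θ)
  exact (isBoundedBilinearMap_apply.continuous).measurable.comp h1

lemma C_measurable (hv : Differentiable ℝ v) (θ : RN N → ℝ) :
    Measurable (fun x => (v x * star (fderiv ℝ v x (gradient θ x))).im) :=
  Complex.measurable_im.comp
    ((hv.continuous.measurable).mul (continuous_star.measurable.comp (W_measurable v θ)))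

lemma W_norm_le (v : RN N → ℂ) (x : RN N) (g : RN N) :
    ‖fderiv ℝ v x g‖ ≤ ‖g‖ * Real.sqrt (gradNormSq v x) := by
  rw [clm_decomp (fderiv ℝ v x) g]
  have h1 : ‖∑ i, g i • fderiv ℝ v x (EuclideanSpace.single i 1)‖
      ≤ ∑ i, |g i| * ‖fderiv ℝ v x (EuclideanSpace.single i 1)‖ := by
    refine (norm_sum_le _ _).trans_eq ?_
    congr 1; ext i; rw [norm_smul, Real.norm_eq_abs]
  refine h1.trans ?_
  have hcs : (∑ i, |g i| * ‖fderiv ℝ v x (EuclideanSpace.single i 1)‖)^2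
      ≤ (∑ i, (g i)^2) * (∑ i, ‖fderiv ℝ v x (EuclideanSpace.single i 1)‖^2) := by
    have := Finset.sum_mul_sq_le_sq_mul_sq Finset.univ (fun i => |g i|)
      (fun i => ‖fderiv ℝ v x (EuclideanSpace.single i 1)‖)
    simpa [sq_abs] using this
  have hA : (∑ i, ‖fderiv ℝ v x (EuclideanSpace.single i 1)‖^2) = gradNormSq v x := rfl
  rw [hA] at hcs
  have hg2 : (∑ i, (g i)^2) = ‖g‖^2 := (eucl_norm_sq g).symm
  rw [hg2] at hcs
  have hnn : 0 ≤ ∑ i, |g i| * ‖fderiv ℝ v x (EuclideanSpace.single i 1)‖ :=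
    Finset.sum_nonneg fun i _ => mul_nonneg (abs_nonneg _) (norm_nonneg _)
  calc (∑ i, |g i| * ‖fderiv ℝ v x (EuclideanSpace.single i 1)‖)
      = Real.sqrt ((∑ i, |g i| * ‖fderiv ℝ v x (EuclideanSpace.single i 1)‖)^2) :=
        (Real.sqrt_sq hnn).symm
    _ ≤ Real.sqrt (‖g‖^2 * gradNormSq v x) := Real.sqrt_le_sqrt hcs
    _ = ‖g‖ * Real.sqrt (gradNormSq v x) := by
        rw [Real.sqrt_mul (sq_nonneg _), Real.sqrt_sq (norm_nonneg _)]

lemma C_bound (v : RN N → ℂ) (θ : RN N → ℝ) (x : RN N) :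
    |(v x * star (fderiv ℝ v x (gradient θ x))).im|
      ≤ (‖v x‖^2 * ‖gradient θ x‖^2 + gradNormSq v x)/2 := by
  set g := gradient θ x
  have h1 : |(v x * star (fderiv ℝ v x g)).im| ≤ ‖v x‖ * ‖fderiv ℝ v x g‖ := by
    refine (Complex.abs_im_le_norm _).trans ?_
    rw [norm_mul, norm_star]
  have h2 := W_norm_le v x g
  have h3 : Real.sqrt (gradNormSq v x)^2 = gradNormSq v x :=
    Real.sq_sqrt (gradNormSq_nonneg v x)
  nlinarith [sq_nonneg (‖v x‖ * ‖g‖ - Real.sqrt (gradNormSq v x)), norm_nonneg (v x),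
    norm_nonneg g, Real.sqrt_nonneg (gradNormSq v x), norm_nonneg (fderiv ℝ v x g),
    mul_nonneg (norm_nonneg (v x)) (norm_nonneg g)]

lemma C_integrable (hv : Differentiable ℝ v) (θ : RN N → ℝ)
    (hA : Integrable (gradNormSq v)) (hB : Integrable (fun x => ‖v x‖^2 * ‖gradient θ x‖^2)) :
    Integrable (fun x => (v x * star (fderiv ℝ v x (gradient θ x))).im) := by
  refine Integrable.mono' ((hB.add hA).div_const 2) ((C_measurable hv θ).aestronglyMeasurable) ?_
  refine ae_of_all _ fun x => ?_
  rw [Real.norm_eq_abs]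
  exact C_bound v θ x

lemma uu_memL2 (hv : InH1 v) (hθ : Differentiable ℝ θ) (l : ℝ) :
    MemLp (uu v θ l) 2 (volume : Measure (RN N)) :=
  hv.1.of_le ((uu_differentiable hv.2.1 hθ l).continuous.aestronglyMeasurable)
    (ae_of_all _ fun x => le_of_eq (uu_norm l x))

lemma uu_gradNormSq_eq (hv : Differentiable ℝ v) (hθ : Differentiable ℝ θ) (l : ℝ) :
    gradNormSq (uu v θ l) = fun x => gradNormSq v x + l^2 * (‖v x‖^2 * ‖gradient θ x‖^2)
      - 2*l*((v x * star (fderiv ℝ v x (gradient θ x))).im) :=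
  funext fun x => gradNormSq_uu hv hθ l x

lemma uu_gradNormSq_integrable (hv : InH1 v) (hθ : Differentiable ℝ θ)
    (hB : Integrable (fun x => ‖v x‖^2 * ‖gradient θ x‖^2)) (l : ℝ) :
    Integrable (gradNormSq (uu v θ l)) := by
  rw [uu_gradNormSq_eq hv.2.1 hθ l]
  exact (hv.2.2.add (hB.const_mul _)).sub ((C_integrable hv.2.1 θ hv.2.2 hB).const_mul _)

lemma uu_gradL2sq (hv : InH1 v) (hθ : Differentiable ℝ θ)
    (hB : Integrable (fun x => ‖v x‖^2 * ‖gradient θ x‖^2)) (l : ℝ) :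
    gradL2sq (uu v θ l) = gradL2sq v + l^2 * (∫ x, ‖v x‖^2 * ‖gradient θ x‖^2)
      - 2*l*(∫ x, (v x * star (fderiv ℝ v x (gradient θ x))).im) := by
  have hA : Integrable (gradNormSq v) := hv.2.2
  have hB2 : Integrable (fun x => l ^ 2 * (‖v x‖ ^ 2 * ‖gradient θ x‖ ^ 2)) := hB.const_mul _
  have hAB : Integrable
      (fun x => gradNormSq v x + l ^ 2 * (‖v x‖ ^ 2 * ‖gradient θ x‖ ^ 2)) := hA.add hB2
  have hC2 : Integrable
      (fun x => 2 * l * (v x * star (fderiv ℝ v x (gradient θ x))).im) :=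
    (C_integrable hv.2.1 θ hv.2.2 hB).const_mul _
  rw [gradL2sq, uu_gradNormSq_eq hv.2.1 hθ l]
  rw [integral_sub hAB hC2, integral_add hA hB2, MeasureTheory.integral_const_mul, MeasureTheory.integral_const_mul]
  rfl

lemma uu_L2sq (l : ℝ) : L2sq (uu v θ l) = L2sq v := by
  rw [L2sq, L2sq]; simp only [uu_norm]

lemma uu_potential (b σ l : ℝ) : potential b σ (uu v θ l) = potential b σ v := by
  rw [potential, potential]; simp only [uu_norm]

lemma uu_energy (hv : InH1 v) (hθ : Differentiable ℝ θ)
    (hB : Integrable (fun x => ‖v x‖^2 * ‖gradient θ x‖^2)) (b σ l : ℝ) :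
    energy b σ (uu v θ l) = energy b σ v
      + l^2/2 * (∫ x, ‖v x‖^2 * ‖gradient θ x‖^2)
      - l * (∫ x, (v x * star (fderiv ℝ v x (gradient θ x))).im) := by
  rw [energy, energy, uu_gradL2sq hv hθ hB l, uu_potential]
  ring

lemma uu_ne_zero (hv0 : v ≠ 0) (l : ℝ) : uu v θ l ≠ 0 := by
  intro h
  refine hv0 (funext fun x => ?_)
  have := congrFun h x
  simp only [uu, Pi.zero_apply, mul_eq_zero] at this
  rcases this with h1 | h1
  · exact absurd h1 (Complex.exp_ne_zero _)
  · exact h1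

lemma uu_InH1 (hv : InH1 v) (hθ : Differentiable ℝ θ)
    (hB : Integrable (fun x => ‖v x‖^2 * ‖gradient θ x‖^2)) (l : ℝ) : InH1 (uu v θ l) :=
  ⟨uu_memL2 hv hθ l, uu_differentiable hv.2.1 hθ l, uu_gradNormSq_integrable hv hθ hB l⟩

lemma energy_nonneg_of {N : ℕ} {b σ : ℝ} (hN : 1 ≤ N) (hσ : σ = (2-b)/N) (hb2 : b < 2)
    (u : RN N → ℂ) (hu : InH1 u) (hu0 : u ≠ 0)
    (hK : 0 < Kopt N b σ)
    (hmass2 : Kopt N b σ * L2norm u ^ (2*σ) ≤ σ + 1)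
    (hL2 : 0 < L2norm u) (hq : 0 < gradL2sq u) :
    0 ≤ energy b σ u := by
  have hNpos : (0:ℝ) < N := by exact_mod_cast hN
  have hNσb : (N:ℝ)*σ + b = 2 := by rw [hσ]; field_simp; ring
  have hσpos : 0 < σ := by rw [hσ]; exact div_pos (by linarith) hNpos
  have hBdd : BddAbove { r : ℝ | ∃ w : RN N → ℂ, InH1 w ∧ w ≠ 0 ∧
      r = potential b σ w /
        (gradL2norm w ^ ((N:ℝ)*σ + b) * L2norm w ^ (2*σ+2 - ((N:ℝ)*σ+b))) } := by
    by_contra hb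
    rw [Kopt, Real.sSup_of_not_bddAbove hb] at hK
    exact lt_irrefl _ hK
  have hmem : potential b σ u /
      (gradL2norm u ^ ((N:ℝ)*σ + b) * L2norm u ^ (2*σ+2 - ((N:ℝ)*σ+b)))
      ∈ { r : ℝ | ∃ w : RN N → ℂ, InH1 w ∧ w ≠ 0 ∧
        r = potential b σ w /
          (gradL2norm w ^ ((N:ℝ)*σ + b) * L2norm w ^ (2*σ+2 - ((N:ℝ)*σ+b))) } :=
    ⟨u, hu, hu0, rfl⟩
  have hle : potential b σ u /
      (gradL2norm u ^ ((N:ℝ)*σ + b) * L2norm u ^ (2*σ+2 - ((N:ℝ)*σ+b))) ≤ Kopt N b σ :=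
    le_csSup hBdd hmem
  have he1 : gradL2norm u ^ ((N:ℝ)*σ + b) = gradL2sq u := by
    rw [hNσb, show (2:ℝ) = ((2:ℕ):ℝ) by norm_num, Real.rpow_natCast, gradL2norm,
      Real.sq_sqrt hq.le]
  have he2 : (2*σ+2 - ((N:ℝ)*σ+b)) = 2*σ := by rw [hNσb]; ring
  rw [he1, he2] at hle
  have hD : 0 < gradL2sq u * L2norm u ^ (2*σ) :=
    mul_pos hq (Real.rpow_pos_of_pos hL2 _)
  rw [div_le_iff₀ hD] at hle
  have hpot : potential b σ u ≤ gradL2sq u * (σ + 1) := by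
    calc potential b σ u ≤ Kopt N b σ * (gradL2sq u * L2norm u ^ (2*σ)) := hle
      _ = gradL2sq u * (Kopt N b σ * L2norm u ^ (2*σ)) := by ring
      _ ≤ gradL2sq u * (σ + 1) := by
          exact mul_le_mul_of_nonneg_left hmass2 hq.le
  rw [energy]
  have h2σ : (0:ℝ) < 2*σ+2 := by linarith
  have hdiv : 1/(2*σ+2) * potential b σ u ≤ 1/(2*σ+2) * (gradL2sq u * (σ+1)) :=
    mul_le_mul_of_nonneg_left hpot (by positivity)
  have heq : 1/(2*σ+2) * (gradL2sq u * (σ+1)) = 1/2 * gradL2sq u := by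
    field_simp
  linarith


end Aux

/-- Banica's Cauchy–Schwarz type inequality for functions with subcritical mass. -/
theorem banica_inequality
    (N : ℕ) (hN : 1 ≤ N) (b : ℝ) (hb0 : 0 < b) (hb2 : b < 2)
    (σ : ℝ) (hσ : σ = (2 - b) / N)
    (v : RN N → ℂ) (hv : InH1 v)
    (hmass : L2norm v ^ ((4 - 2*b)/N) ≤ ((N:ℝ) + 2 - b) / (↑N * Kopt N b σ))
    (θ : RN N → ℝ) (hθ : Differentiable ℝ θ)
    (hint : Integrable (fun x => ‖v x‖^2 * ‖gradient θ x‖^2)) :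
    (∫ x, (v x * star (fderiv ℝ v x (gradient θ x))).im) ^ 2 ≤
      2 * energy b σ v * ∫ x, ‖v x‖^2 * ‖gradient θ x‖^2 := by
  have hNpos : (0:ℝ) < N := by exact_mod_cast hN
  set P := ∫ x, (v x * star (fderiv ℝ v x (gradient θ x))).im with hPdef
  set M := ∫ x, ‖v x‖^2 * ‖gradient θ x‖^2 with hMdef
  have hq : ∀ l : ℝ, gradL2sq (uu v θ l) = gradL2sq v + l^2*M - 2*l*P := by
    intro l
    have h := uu_gradL2sq hv hθ hint l
    rw [← hMdef, ← hPdef] at h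
    exact h
  have hqnn : ∀ l : ℝ, 0 ≤ gradL2sq (uu v θ l) := fun l => gradL2sq_nonneg _
  have hMnn : 0 ≤ M := by
    rw [hMdef]; exact integral_nonneg fun x => by positivity
  rcases hMnn.eq_or_lt with hM0 | hMpos
  · -- M = 0
    have hP0 : P = 0 := by
      by_contra hP
      have h := hqnn ((gradL2sq v + 1)/(2*P))
      rw [hq ((gradL2sq v + 1)/(2*P)), ← hM0] at h
      have h2 : 2*((gradL2sq v + 1)/(2*P))*P = gradL2sq v + 1 := by field_simp
      nlinarith
    rw [hP0, ← hM0]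
    simp
  · -- 0 < M
    have hv0 : v ≠ 0 := by
      rintro rfl
      rw [hMdef] at hMpos
      simp at hMpos
    obtain ⟨x₀, hx₀⟩ := Function.ne_iff.mp hv0
    simp only [Pi.zero_apply] at hx₀
    have hvcont : Continuous v := hv.2.1.continuous
    have hL2sqpos : 0 < L2sq v := by
      rw [L2sq]
      rw [integral_pos_iff_support_of_nonneg_ae (ae_of_all _ fun x => by positivity)
        ((memLp_two_iff_integrable_sq_norm hvcont.aestronglyMeasurable).mp hv.1)]
      have hsub : {x : RN N | v x ≠ 0} ⊆ Function.support fun x => ‖v x‖^2 := by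
        intro x hx
        simp [Function.support, hx]
      have hopen : IsOpen {x : RN N | v x ≠ 0} :=
        isOpen_compl_singleton.preimage hvcont
      exact (hopen.measure_pos volume ⟨x₀, hx₀⟩).trans_le (measure_mono hsub)
    have hL2pos : 0 < L2norm v := Real.sqrt_pos.mpr hL2sqpos
    have hexp : (4 - 2*b)/(N:ℝ) = 2*σ := by rw [hσ]; field_simp; ring
    have hK : 0 < Kopt N b σ := by
      rcases lt_trichotomy (Kopt N b σ) 0 with h | h | h
      · exfalso
        have h1 : ((N:ℝ)+2-b)/((N:ℝ)*Kopt N b σ) < 0 :=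
          div_neg_of_pos_of_neg (by linarith) (mul_neg_of_pos_of_neg hNpos h)
        have h2 : (0:ℝ) ≤ L2norm v ^ ((4-2*b)/(N:ℝ)) :=
          Real.rpow_nonneg hL2pos.le _
        linarith
      · exfalso
        rw [h, mul_zero, div_zero] at hmass
        have h1 : L2norm v ^ ((4-2*b)/(N:ℝ)) = 0 :=
          le_antisymm hmass (Real.rpow_nonneg hL2pos.le _)
        rw [Real.rpow_eq_zero_iff_of_nonneg hL2pos.le] at h1
        exact hL2pos.ne' h1.1
      · exact h
    have hmass2 : Kopt N b σ * L2norm v ^ (2*σ) ≤ σ + 1 := by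
      rw [← hexp]
      calc Kopt N b σ * L2norm v ^ ((4-2*b)/(N:ℝ))
          ≤ Kopt N b σ * (((N:ℝ)+2-b)/((N:ℝ)*Kopt N b σ)) :=
            mul_le_mul_of_nonneg_left hmass hK.le
        _ = ((N:ℝ)+2-b)/(N:ℝ) := by field_simp
        _ = σ + 1 := by rw [hσ]; field_simp; ring
    by_contra hcon
    push_neg at hcon
    obtain ⟨c, hcdef⟩ : ∃ c : ℝ, c = energy b σ v - P^2/(2*M) := ⟨_, rfl⟩
    have hc : c < 0 := by
      rw [hcdef, sub_neg, lt_div_iff₀ (by positivity)]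
      nlinarith
    obtain ⟨δ, hδdef⟩ : ∃ d : ℝ, d = Real.sqrt (-c/M) := ⟨_, rfl⟩
    have hδsq : δ^2 = -c/M := by
      rw [hδdef]; exact Real.sq_sqrt (div_nonneg (by linarith) hMpos.le)
    obtain ⟨l1, hl1def⟩ : ∃ l : ℝ, l = P/M + δ := ⟨_, rfl⟩
    have hq0 : 0 ≤ gradL2sq v - P^2/M := by
      have h := hqnn (P/M)
      rw [hq (P/M)] at h
      have h2 : gradL2sq v + (P/M)^2*M - 2*(P/M)*P = gradL2sq v - P^2/M := by
        field_simp
        ring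
      linarith
    have hMδ : M*δ^2 = -c := by
      rw [hδsq]
      field_simp
    have hq1 : 0 < gradL2sq (uu v θ l1) := by
      rw [hq l1]
      have h1 : gradL2sq v + l1^2*M - 2*l1*P = (gradL2sq v - P^2/M) + M*δ^2 := by
        rw [hl1def]; field_simp; ring
      rw [h1, hMδ]
      linarith
    have hEl1 : energy b σ (uu v θ l1) = c/2 := by
      have h := uu_energy hv hθ hint b σ l1
      rw [← hMdef, ← hPdef] at h
      rw [h]
      have h1 : energy b σ v + l1^2/2*M - l1*P = (energy b σ v - P^2/(2*M)) + (M*δ^2)/2 := by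
        rw [hl1def]; field_simp; ring
      rw [h1, hMδ, ← hcdef]
      ring
    have hL2uu : L2norm (uu v θ l1) = L2norm v := by
      rw [L2norm, L2norm, uu_L2sq]
    have hpos := energy_nonneg_of hN hσ hb2 (uu v θ l1) (uu_InH1 hv hθ hint l1)
      (uu_ne_zero hv0 l1) hK (by rw [hL2uu]; exact hmass2) (by rw [hL2uu]; exact hL2pos) hq1
    rw [hEl1] at hpos
    linarith


end
end

section
/- Let N ≥ 3, 0 < b < 2 and 0 < σ < (2−b)/(N−2). Then there exist an exponent q with 2 < q < 2N/(N−2) and a constant C > 0, depending only on N, b and σ, such that for every v ∈ L^q(ℝᴺ;ℂ): ∫_{|x| ≤ 1} |x|^{−b}|v|^{2σ+2} dx ≤ C·‖v‖_{L^q(ℝᴺ)}^{2σ+2}. -/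
open MeasureTheory Filter Topology

noncomputable section

section AuxSingularWeight
open Set Metric ENNReal

lemma lint_weight (N : ℕ) (hN : 0 < N) {s : ℝ} (hs0 : 0 ≤ s) (hsN : s < N) :
    ∫⁻ x in {x : RN N | ‖x‖ ≤ 1}, ENNReal.ofReal (‖x‖ ^ (-s)) < ⊤ := by
  haveI : Nonempty (Fin N) := ⟨⟨0, hN⟩⟩
  set c : ℕ → ℝ := fun k => (2:ℝ) ^ (-(k:ℝ)) with hc
  have hcpos : ∀ k, 0 < c k := fun k => Real.rpow_pos_of_pos two_pos _
  have hck : ∀ k : ℕ, c k = ((2:ℝ)⁻¹) ^ k := by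
    intro k
    show (2:ℝ) ^ (-(k:ℝ)) = ((2:ℝ)⁻¹) ^ k
    rw [Real.rpow_neg (by norm_num), Real.rpow_natCast]
    exact (inv_pow 2 k).symm
  set S : ℕ → Set (RN N) := fun k => {x | c (k+1) < ‖x‖ ∧ ‖x‖ ≤ c k} with hS
  have cover : {x : RN N | ‖x‖ ≤ 1} ⊆ {0} ∪ ⋃ k, S k := by
    intro x hx
    rcases eq_or_ne x 0 with rfl | hx0
    · exact Or.inl rfl
    right
    have hxpos : 0 < ‖x‖ := norm_pos_iff.2 hx0
    have hex : ∃ n : ℕ, c (n+1) < ‖x‖ := by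
      obtain ⟨n, hn⟩ := exists_pow_lt_of_lt_one hxpos (by norm_num : (2:ℝ)⁻¹ < 1)
      refine ⟨n, ?_⟩
      rw [hck]
      calc ((2:ℝ)⁻¹) ^ (n+1) < ((2:ℝ)⁻¹) ^ n := by
            apply pow_lt_pow_right_of_lt_one₀ (by norm_num) (by norm_num) (Nat.lt_succ_self n)
        _ < ‖x‖ := hn
    set k := Nat.find hex with hk
    have hk1 : c (k+1) < ‖x‖ := Nat.find_spec hex
    have hk2 : ‖x‖ ≤ c k := by
      rcases Nat.eq_zero_or_pos k with hk0 | hkpos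
      · rw [hk0]; simpa [hc] using hx
      · have := Nat.find_min hex (Nat.sub_lt hkpos one_pos)
        push_neg at this
        have hkk : k - 1 + 1 = k := Nat.succ_pred_eq_of_pos hkpos
        rwa [hkk] at this
    exact mem_iUnion.2 ⟨k, hk1, hk2⟩
  have hB : volume (ball (0 : RN N) 1) < ⊤ := measure_ball_lt_top
  have hfr : Module.finrank ℝ (RN N) = N := finrank_euclideanSpace_fin
  have hSbound : ∀ k, (∫⁻ x in S k, ENNReal.ofReal (‖x‖ ^ (-s)))
      ≤ ENNReal.ofReal ((2:ℝ) ^ s * ((2:ℝ) ^ (s - (N:ℝ))) ^ k) * volume (ball (0 : RN N) 1) := by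
    intro k
    have h1 : (∫⁻ x in S k, ENNReal.ofReal (‖x‖ ^ (-s)))
        ≤ ∫⁻ _x in S k, ENNReal.ofReal (c (k+1) ^ (-s)) := by
      apply setLIntegral_mono measurable_const
      intro x hx
      exact ENNReal.ofReal_le_ofReal
        (Real.rpow_le_rpow_of_nonpos (hcpos (k+1)) hx.1.le (neg_nonpos.2 hs0))
    have h2 : (∫⁻ _x in S k, ENNReal.ofReal (c (k+1) ^ (-s)))
        = ENNReal.ofReal (c (k+1) ^ (-s)) * volume (S k) := setLIntegral_const _ _
    have h3 : volume (S k) ≤ volume (closedBall (0 : RN N) (c k)) :=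
      measure_mono fun x hx => mem_closedBall_zero_iff.2 hx.2
    have h4 : volume (closedBall (0 : RN N) (c k))
        = ENNReal.ofReal (c k ^ N) * volume (ball (0 : RN N) 1) := by
      rw [Measure.addHaar_closedBall volume (0 : RN N) (hcpos k).le, hfr]
    have halg : c (k+1) ^ (-s) * c k ^ N = (2:ℝ) ^ s * ((2:ℝ) ^ (s - (N:ℝ))) ^ k := by
      show ((2:ℝ) ^ (-((k:ℕ)+1:ℕ):ℝ)) ^ (-s) * ((2:ℝ) ^ (-(k:ℝ))) ^ N = _
      rw [← Real.rpow_natCast ((2:ℝ) ^ (-((k:ℝ)))) N, ← Real.rpow_natCast ((2:ℝ) ^ (s - (N:ℝ))) k,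
        ← Real.rpow_mul (by norm_num : (0:ℝ) ≤ 2), ← Real.rpow_mul (by norm_num : (0:ℝ) ≤ 2),
        ← Real.rpow_mul (by norm_num : (0:ℝ) ≤ 2),
        ← Real.rpow_add (by norm_num : (0:ℝ) < 2), ← Real.rpow_add (by norm_num : (0:ℝ) < 2)]
      congr 1
      push_cast
      ring
    calc (∫⁻ x in S k, ENNReal.ofReal (‖x‖ ^ (-s)))
        ≤ ENNReal.ofReal (c (k+1) ^ (-s)) * volume (S k) := h1.trans_eq h2
      _ ≤ ENNReal.ofReal (c (k+1) ^ (-s)) * (ENNReal.ofReal (c k ^ N) * volume (ball (0 : RN N) 1)) := by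
          rw [← h4]; exact mul_le_mul_right h3 _
      _ = ENNReal.ofReal (c (k+1) ^ (-s) * c k ^ N) * volume (ball (0 : RN N) 1) := by
          rw [ENNReal.ofReal_mul (Real.rpow_nonneg (hcpos (k+1)).le _), mul_assoc]
      _ = _ := by rw [halg]
  have hsum : (∑' k, ENNReal.ofReal ((2:ℝ) ^ s * ((2:ℝ) ^ (s - (N:ℝ))) ^ k)
      * volume (ball (0 : RN N) 1)) < ⊤ := by
    have hr0 : (0:ℝ) ≤ (2:ℝ) ^ (s - (N:ℝ)) := (Real.rpow_pos_of_pos two_pos _).le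
    have hr1 : ENNReal.ofReal ((2:ℝ) ^ (s - (N:ℝ))) < 1 := by
      rw [← ENNReal.ofReal_one]
      exact ENNReal.ofReal_lt_ofReal_iff_of_nonneg hr0 |>.2
        (Real.rpow_lt_one_of_one_lt_of_neg one_lt_two (by linarith))
    have : ∀ k : ℕ, ENNReal.ofReal ((2:ℝ) ^ s * ((2:ℝ) ^ (s - (N:ℝ))) ^ k)
        = ENNReal.ofReal ((2:ℝ) ^ s) * (ENNReal.ofReal ((2:ℝ) ^ (s - (N:ℝ)))) ^ k := by
      intro k
      rw [ENNReal.ofReal_mul (Real.rpow_nonneg (by norm_num) _), ENNReal.ofReal_pow hr0]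
    simp_rw [this]
    rw [ENNReal.tsum_mul_right, ENNReal.tsum_mul_left, ENNReal.tsum_geometric]
    refine ENNReal.mul_lt_top (ENNReal.mul_lt_top ENNReal.ofReal_lt_top ?_) hB
    exact ENNReal.inv_lt_top.2 (tsub_pos_of_lt hr1)
  calc (∫⁻ x in {x : RN N | ‖x‖ ≤ 1}, ENNReal.ofReal (‖x‖ ^ (-s)))
      ≤ ∫⁻ x in ({0} ∪ ⋃ k, S k : Set (RN N)), ENNReal.ofReal (‖x‖ ^ (-s)) :=
        lintegral_mono_set cover
    _ ≤ (∫⁻ x in ({0} : Set (RN N)), ENNReal.ofReal (‖x‖ ^ (-s)))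
        + ∫⁻ x in (⋃ k, S k : Set (RN N)), ENNReal.ofReal (‖x‖ ^ (-s)) :=
        lintegral_union_le _ _ _
    _ ≤ 0 + ∑' k, ∫⁻ x in S k, ENNReal.ofReal (‖x‖ ^ (-s)) := by
        gcongr
        · exact le_of_eq (setLIntegral_measure_zero _ _ (measure_singleton 0))
        · exact lintegral_iUnion_le _ _
    _ ≤ 0 + ∑' k, ENNReal.ofReal ((2:ℝ) ^ s * ((2:ℝ) ^ (s - (N:ℝ))) ^ k)
        * volume (ball (0 : RN N) 1) := by
        gcongr with k
        exact hSbound k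
    _ < ⊤ := by simpa using hsum

end AuxSingularWeight

/-- Hölder control of the singular-weight integral over the unit ball. -/
theorem singular_weight_unit_ball_estimate
    (N : ℕ) (hN : 3 ≤ N) (b σ : ℝ) (hb0 : 0 < b) (hb2 : b < 2)
    (hσ0 : 0 < σ) (hσu : σ < (2 - b) / ((N:ℝ) - 2)) :
    ∃ q : ℝ, 2 < q ∧ q < 2*N/((N:ℝ) - 2) ∧
      ∃ C : ℝ, 0 < C ∧ ∀ v : RN N → ℂ, MemLp v (ENNReal.ofReal q) volume →
        (∫ x in {x : RN N | ‖x‖ ≤ 1}, ‖x‖ ^ (-b) * ‖v x‖ ^ (2*σ+2)) ≤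
          C * (∫ x, ‖v x‖ ^ q) ^ ((2*σ+2)/q) := by
  have hn3 : (3:ℝ) ≤ (N:ℝ) := by exact_mod_cast hN
  set n := (N:ℝ) with hn
  have hn2 : (0:ℝ) < n - 2 := by linarith
  have hnb : 0 < n - b := by linarith
  have hn0 : 0 < n := by linarith
  have hkey : (σ+1)*(n-2) < n - b := by
    have h1 : σ * (n-2) < 2 - b := (lt_div_iff₀ hn2).mp hσu
    nlinarith
  set a := n/(n-b) with ha
  set cγ := n/((σ+1)*(n-2)) with hcγ
  have ha1 : 1 < a := (one_lt_div hnb).2 (by linarith)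
  have hac : a < cγ := div_lt_div_of_pos_left hn0 (by positivity) hkey
  set γ := (a + cγ)/2 with hγdef
  have hγa : a < γ := by rw [hγdef]; linarith
  have hγ1 : 1 < γ := lt_trans ha1 hγa
  have hγ0 : 0 < γ := by linarith
  have hγc : γ < cγ := by rw [hγdef]; linarith
  set γ' := γ/(γ-1) with hγ'def
  have hpq : γ'.HolderConjugate γ := (Real.HolderConjugate.conjExponent hγ1).symm
  have hγ'0 : 0 < γ' := hpq.pos
  set q := (2*σ+2)*γ with hq
  have hq2 : 2 < q := by nlinarith
  have hq0 : 0 < q := by linarith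
  have hqlt : q < 2*n/(n-2) := by
    have h1 : (2*σ+2)*cγ = 2*n/(n-2) := by
      rw [hcγ]; field_simp
    calc q < (2*σ+2)*cγ := by nlinarith
    _ = _ := h1
  have hbγ' : b * γ' < n := by
    have hγ1' : 0 < γ - 1 := by linarith
    rw [hγ'def, ← mul_div_assoc, div_lt_iff₀ hγ1']
    have h2 : n < γ*(n-b) := by
      have := (div_lt_iff₀ hnb).mp hγa
      linarith
    nlinarith
  refine ⟨q, hq2, hqlt, ?_⟩
  set B := {x : RN N | ‖x‖ ≤ 1} with hBdef
  set A := ∫ x in B, (‖x‖ ^ (-b)) ^ γ' with hA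
  have hA0 : 0 ≤ A :=
    integral_nonneg fun x => Real.rpow_nonneg (Real.rpow_nonneg (norm_nonneg x) _) _
  refine ⟨A ^ (1/γ') + 1, by positivity, fun v hv => ?_⟩
  have hwm : Measurable fun x : RN N => ‖x‖ ^ (-b) := by fun_prop
  have hexp : (2*σ+2)/q = 1/γ := by
    rw [hq]
    field_simp
  -- weight Memℒp
  have hw : MemLp (fun x : RN N => ‖x‖ ^ (-b)) (ENNReal.ofReal γ') (volume.restrict B) := by
    refine ⟨hwm.aestronglyMeasurable, ?_⟩
    rw [eLpNorm_eq_lintegral_rpow_enorm_toReal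
      (by simp only [ne_eq, ENNReal.ofReal_eq_zero, not_le]; linarith) ENNReal.ofReal_ne_top,
      ENNReal.toReal_ofReal hγ'0.le]
    refine ENNReal.rpow_lt_top_of_nonneg (by positivity) ?_
    have heq : ∀ x : RN N, ‖(‖x‖ ^ (-b))‖ₑ ^ γ'
        = ENNReal.ofReal (‖x‖ ^ (-(b*γ'))) := by
      intro x
      rw [← ofReal_norm, Real.norm_of_nonneg (Real.rpow_nonneg (norm_nonneg x) _),
        ENNReal.ofReal_rpow_of_nonneg (Real.rpow_nonneg (norm_nonneg x) _) hγ'0.le,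
        ← Real.rpow_mul (norm_nonneg x), neg_mul]
    simp only [heq]
    exact (lint_weight N (by omega) (by positivity) hbγ').ne
  -- power of v Memℒp
  have hg : MemLp (fun x : RN N => ‖v x‖ ^ (2*σ+2)) (ENNReal.ofReal γ) (volume.restrict B) := by
    have h1 := hv.restrict B
    have h2 : ENNReal.ofReal q / ENNReal.ofReal (2*σ+2) = ENNReal.ofReal γ := by
      rw [← ENNReal.ofReal_div_of_pos (by linarith), hq]
      congr 1
      field_simp
    have h3 := (memLp_norm_rpow_iff h1.1
      (by simp only [ne_eq, ENNReal.ofReal_eq_zero, not_le]; linarith)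
      (ENNReal.ofReal_ne_top : ENNReal.ofReal (2*σ+2) ≠ ⊤)).2 h1
    rwa [ENNReal.toReal_ofReal (by linarith), h2] at h3
  have hold := integral_mul_le_Lp_mul_Lq_of_nonneg (μ := volume.restrict B) hpq
    (Filter.Eventually.of_forall fun x => Real.rpow_nonneg (norm_nonneg x) _)
    (Filter.Eventually.of_forall fun x => Real.rpow_nonneg (norm_nonneg _) _)
    hw hg
  have hvint : Integrable (fun x : RN N => ‖v x‖ ^ q) := by
    have := hv.integrable_norm_rpow
      (by simp only [ne_eq, ENNReal.ofReal_eq_zero, not_le]; linarith) ENNReal.ofReal_ne_top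
    rwa [ENNReal.toReal_ofReal hq0.le] at this
  have hEq : (∫ x in B, (‖v x‖ ^ (2*σ+2)) ^ γ) = ∫ x in B, ‖v x‖ ^ q := by
    refine integral_congr_ae (Filter.Eventually.of_forall fun x => ?_)
    show (‖v x‖ ^ (2*σ+2)) ^ γ = ‖v x‖ ^ q
    rw [← Real.rpow_mul (norm_nonneg _)]
  have hX0 : 0 ≤ ∫ x : RN N, ‖v x‖ ^ q :=
    integral_nonneg fun x => Real.rpow_nonneg (norm_nonneg _) _
  have hle2 : (∫ x in B, ‖v x‖ ^ q) ≤ ∫ x : RN N, ‖v x‖ ^ q :=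
    setIntegral_le_integral hvint
      (Filter.Eventually.of_forall fun x => Real.rpow_nonneg (norm_nonneg _) _)
  have hfin : (∫ x in B, (‖v x‖ ^ (2*σ+2)) ^ γ) ^ (1/γ)
      ≤ (∫ x : RN N, ‖v x‖ ^ q) ^ ((2*σ+2)/q) := by
    rw [hexp]
    exact Real.rpow_le_rpow
      (integral_nonneg fun x => Real.rpow_nonneg (Real.rpow_nonneg (norm_nonneg _) _) _)
      (hEq ▸ hle2) (by positivity)
  calc (∫ x in B, ‖x‖ ^ (-b) * ‖v x‖ ^ (2*σ+2))
      ≤ A ^ (1/γ') * (∫ x in B, (‖v x‖ ^ (2*σ+2)) ^ γ) ^ (1/γ) := hold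
    _ ≤ A ^ (1/γ') * (∫ x : RN N, ‖v x‖ ^ q) ^ ((2*σ+2)/q) :=
        mul_le_mul_of_nonneg_left hfin (Real.rpow_nonneg hA0 _)
    _ ≤ (A ^ (1/γ') + 1) * (∫ x : RN N, ‖v x‖ ^ q) ^ ((2*σ+2)/q) :=
        mul_le_mul_of_nonneg_right (by linarith) (Real.rpow_nonneg hX0 _)

end
end

section
/- Let N ≥ 2 and p ≥ 1. There exists a constant C_N > 0, depending only on N, such that for every radial f ∈ L^p(ℝᴺ;ℂ), every x₀ ∈ ℝᴺ and every r > 0 with |x₀| ≥ 2r: ∫_{|x₀|−r ≤ |x| ≤ |x₀|+r} |f(x)|^p dx ≥ C_N·(|x₀|/r)^{N−1}·∫_{|x−x₀| ≤ r} |f(x)|^p dx. -/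
open MeasureTheory Filter Topology

noncomputable section

open Metric Set

lemma rn_nontrivial' {N : ℕ} (hN : 2 ≤ N) : Nontrivial (RN N) := by
  refine ⟨0, EuclideanSpace.single ⟨0, by omega⟩ 1, ?_⟩
  intro h
  have := congrArg (fun v : RN N => v ⟨0, by omega⟩) h
  simp at this

lemma rot_ball_integral {N : ℕ} (hN : 2 ≤ N) (g : RN N → ℝ)
    (hg : ∀ x y : RN N, ‖x‖ = ‖y‖ → g x = g y)
    (x₀ x : RN N) (hx : ‖x‖ = ‖x₀‖) (r : ℝ) :
    ∫ y in ball x r, g y = ∫ y in closedBall x₀ r, g y := by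
  haveI := rn_nontrivial' hN
  obtain ⟨e, he⟩ : ∃ e : RN N ≃ₗᵢ[ℝ] RN N, e x₀ = x :=
    ⟨Submodule.reflection (ℝ ∙ (x₀ - x))ᗮ, Submodule.reflection_sub hx.symm⟩
  have hmp : MeasurePreserving (⇑e) volume volume := e.measurePreserving
  have himg : ⇑e '' ball x₀ r = ball x r := by
    have := e.toIsometryEquiv.image_ball x₀ r
    simpa [he] using this
  have h1 : ∫ y in ball x r, g y = ∫ y in ball x₀ r, g (e y) := by
    rw [← himg, hmp.setIntegral_image_emb e.toMeasurableEquiv.measurableEmbedding]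
  have h2 : ∀ y, g (e y) = g y := fun y => hg _ _ (e.norm_map y)
  rw [h1]
  simp_rw [h2]
  apply setIntegral_congr_set
  refine (MeasureTheory.ae_eq_set.2 ⟨?_, ?_⟩)
  · simp [diff_eq_empty.2 ball_subset_closedBall]
  · rw [closedBall_diff_ball]; exact Measure.addHaar_sphere _ _ _

lemma exists_net {N : ℕ} (hN : 2 ≤ N) (R r : ℝ) (hr : 0 < r) (hRr : 2*r ≤ R) :
    ∃ S : Finset (RN N), (↑S ⊆ sphere (0:RN N) R) ∧
      (↑S : Set (RN N)).Pairwise (fun a b => 2*r ≤ dist a b) ∧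
      4/6^N * (R/r)^(N-1) ≤ (S.card : ℝ) := by
  classical
  haveI := rn_nontrivial' hN
  have hR : 0 < R := lt_of_lt_of_le (by linarith) hRr
  set ι := volume (ball (0:RN N) 1) with hι
  have hι0 : ι ≠ 0 := (measure_ball_pos volume 0 one_pos).ne'
  have hιt : ι ≠ ⊤ := measure_ball_lt_top.ne
  have hfin : Module.finrank ℝ (RN N) = N := finrank_euclideanSpace_fin
  set P : Finset (RN N) → Prop := fun S =>
    (↑S ⊆ sphere (0:RN N) R) ∧ (↑S : Set (RN N)).Pairwise (fun a b => 2*r ≤ dist a b)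
    with hP
  -- uniform cardinality bound
  have hcard : ∀ S : Finset (RN N), P S → (S.card : ℝ) * r^N ≤ (R+r)^N := by
    intro S hS
    have hdisj : (↑S : Set (RN N)).Pairwise (Function.onFun Disjoint fun x => ball x r) := by
      intro a ha b hb hab
      exact ball_disjoint_ball (by have := hS.2 ha hb hab; linarith)
    have hsub : ∀ x ∈ S, ball x r ⊆ closedBall (0:RN N) (R+r) := by
      intro x hx z hz
      have hxR : ‖x‖ = R := mem_sphere_zero_iff_norm.1 (hS.1 hx)
      have h1 : ‖z - x‖ < r := by rw [← dist_eq_norm]; exact mem_ball.1 hz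
      have h2 : ‖z‖ - ‖x‖ ≤ ‖z - x‖ := norm_sub_norm_le z x
      simp only [mem_closedBall, dist_zero_right]
      linarith
    have hball : ∀ x : RN N, volume (ball x r) = ENNReal.ofReal (r^N) * ι := by
      intro x; rw [Measure.addHaar_ball volume x hr.le, hfin]
    have hmeas : (S.card : ENNReal) * (ENNReal.ofReal (r^N) * ι) ≤ ENNReal.ofReal ((R+r)^N) * ι := by
      calc (S.card : ENNReal) * (ENNReal.ofReal (r^N) * ι)
          = ∑ x ∈ S, volume (ball x r) := by
            rw [Finset.sum_congr rfl (fun x _ => hball x), Finset.sum_const, nsmul_eq_mul]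
        _ = volume (⋃ x ∈ S, ball x r) :=
            (measure_biUnion_finset hdisj (fun _ _ => measurableSet_ball)).symm
        _ ≤ volume (closedBall (0:RN N) (R+r)) := measure_mono (iUnion₂_subset hsub)
        _ = ENNReal.ofReal ((R+r)^N) * ι := by
            rw [Measure.addHaar_closedBall volume _ (by linarith : (0:ℝ) ≤ R + r), hfin]
    rw [← mul_assoc] at hmeas
    have h3 := (ENNReal.mul_le_mul_iff_left hι0 hιt).1 hmeas
    rw [← ENNReal.ofReal_natCast, ← ENNReal.ofReal_mul (Nat.cast_nonneg _)] at h3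
    exact (ENNReal.ofReal_le_ofReal_iff (pow_nonneg (by linarith) N)).1 h3
  -- a maximal separated set exists
  set K : Set ℕ := {n | ∃ S : Finset (RN N), P S ∧ S.card = n} with hK
  have hKne : K.Nonempty := by
    obtain ⟨y, hy⟩ : ∃ y : RN N, ‖y‖ = R := exists_norm_eq _ hR.le
    refine ⟨1, {y}, ⟨by simp [mem_sphere_zero_iff_norm, hy], ?_⟩, Finset.card_singleton y⟩
    rw [Finset.coe_singleton]
    exact Set.pairwise_singleton _ _
  have hKbdd : BddAbove K := by
    refine ⟨Nat.ceil ((R+r)^N / r^N), ?_⟩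
    rintro n ⟨S, hS, rfl⟩
    have h1 : (S.card : ℝ) ≤ (R+r)^N / r^N := by
      rw [le_div_iff₀ (by positivity)]; exact hcard S hS
    exact_mod_cast h1.trans (Nat.le_ceil _)
  obtain ⟨S, hSP, hScard⟩ : sSup K ∈ K := Nat.sSup_mem hKne hKbdd
  refine ⟨S, hSP.1, hSP.2, ?_⟩
  -- maximality : every sphere point is within 2r of S
  have hcover : ∀ y ∈ sphere (0:RN N) R, ∃ x ∈ S, dist y x < 2*r := by
    intro y hy
    by_contra hcon
    push_neg at hcon
    have hyS : y ∉ S := by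
      intro hyS
      have := hcon y hyS
      simp at this; linarith
    have hP' : P (insert y S) := by
      constructor
      · intro z hz
        rw [Finset.coe_insert] at hz
        rcases Set.mem_insert_iff.1 hz with rfl | hz'
        · exact hy
        · exact hSP.1 hz'
      · rw [Finset.coe_insert]
        refine hSP.2.insert ?_
        intro b hb hby
        exact ⟨hcon b hb, by rw [dist_comm]; exact hcon b hb⟩
    have : (insert y S).card ≤ sSup K := le_csSup hKbdd ⟨_, hP', rfl⟩
    rw [Finset.card_insert_of_notMem hyS, hScard] at this
    omega
  -- annulus covered by 3r-balls
  set A : Set (RN N) := closedBall (0:RN N) (R+r) \ ball (0:RN N) (R-r) with hA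
  have hAcover : A ⊆ ⋃ x ∈ S, ball x (3*r) := by
    rintro z ⟨hz1, hz2⟩
    have hz1' : ‖z‖ ≤ R + r := by simpa [dist_zero_right] using hz1
    have hz2' : R - r ≤ ‖z‖ := by
      by_contra hcc; exact hz2 (by simp [mem_ball, dist_zero_right]; linarith)
    have hz0 : 0 < ‖z‖ := by linarith
    set y : RN N := (R / ‖z‖) • z with hy
    have hyR : ‖y‖ = R := by
      rw [hy, norm_smul, Real.norm_eq_abs, abs_of_pos (by positivity), div_mul_cancel₀]
      exact hz0.ne'
    have hdzy : dist z y ≤ r := by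
      have h1 : z - y = (1 - R / ‖z‖) • z := by rw [hy, sub_smul, one_smul]
      have h2 : dist z y = |1 - R / ‖z‖| * ‖z‖ := by
        rw [dist_eq_norm, h1, norm_smul, Real.norm_eq_abs]
      have h3 : ‖z‖ - R = (1 - R / ‖z‖) * ‖z‖ := by field_simp
      have h4 : dist z y = |‖z‖ - R| := by
        rw [h2, h3, abs_mul, abs_of_pos hz0]
      rw [h4, abs_le]
      constructor <;> linarith
    obtain ⟨x, hxS, hxd⟩ := hcover y (mem_sphere_zero_iff_norm.2 hyR)
    refine mem_iUnion₂.2 ⟨x, hxS, ?_⟩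
    rw [mem_ball]
    calc dist z x ≤ dist z y + dist y x := dist_triangle z y x
      _ < r + 2*r := by exact add_lt_add_of_le_of_lt hdzy hxd
      _ = 3*r := by ring
  -- volume counting
  have hvolA : ENNReal.ofReal ((R+r)^N - (R-r)^N) * ι = volume A := by
    rw [hA, measure_diff (ball_subset_closedBall.trans (closedBall_subset_closedBall (by linarith)))
      measurableSet_ball.nullMeasurableSet measure_ball_lt_top.ne,
      Measure.addHaar_closedBall volume _ (by linarith : (0:ℝ) ≤ R + r),
      Measure.addHaar_ball volume _ (by linarith : (0:ℝ) ≤ R - r), hfin,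
      ENNReal.ofReal_sub _ (pow_nonneg (by linarith) N), ENNReal.sub_mul (fun _ _ => hιt)]
  have hvolA2 : volume A ≤ (S.card : ENNReal) * ENNReal.ofReal ((3*r)^N) * ι := by
    calc volume A ≤ volume (⋃ x ∈ S, ball x (3*r)) := measure_mono hAcover
      _ ≤ ∑ x ∈ S, volume (ball x (3*r)) := measure_biUnion_finset_le S _
      _ = (S.card : ENNReal) * ENNReal.ofReal ((3*r)^N) * ι := by
          rw [Finset.sum_congr rfl
            (fun x _ => by rw [Measure.addHaar_ball volume x (by linarith : (0:ℝ) ≤ 3*r), hfin]),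
            Finset.sum_const, nsmul_eq_mul, mul_assoc]
  have hkey0 : (R+r)^N - (R-r)^N ≤ (S.card : ℝ) * (3*r)^N := by
    have h4 := (ENNReal.mul_le_mul_iff_left hι0 hιt).1 (hvolA ▸ hvolA2)
    rw [← ENNReal.ofReal_natCast, ← ENNReal.ofReal_mul (Nat.cast_nonneg _)] at h4
    exact (ENNReal.ofReal_le_ofReal_iff (mul_nonneg (Nat.cast_nonneg _) (pow_nonneg (by linarith) N))).1 h4
  -- final arithmetic
  set n := N - 1 with hn
  have hNn : N = n + 1 := by omega
  have e1 : ∀ a : ℝ, a^N = a^n * a := fun a => by rw [hNn, pow_succ]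
  have hRr' : R - r ≥ R / 2 := by linarith
  have key : R^n * (2*r) ≤ (S.card : ℝ) * (3*r)^N * 2^n := by
    have k1 : R^n ≤ 2^n * (R-r)^n := by
      calc R^n ≤ (2*(R-r))^n := pow_le_pow_left₀ hR.le (by linarith) n
        _ = 2^n * (R-r)^n := mul_pow 2 (R-r) n
    have k2 : (R-r)^n * (2*r) ≤ (R+r)^N - (R-r)^N := by
      have k3 : (R-r)^n * (R+r) ≤ (R+r)^N := by
        rw [e1]
        exact mul_le_mul_of_nonneg_right
          (pow_le_pow_left₀ (by linarith) (by linarith) n) (by linarith)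
      have k4 : (R-r)^N = (R-r)^n * (R-r) := e1 _
      nlinarith
    calc R^n * (2*r) ≤ 2^n * (R-r)^n * (2*r) := by
          apply mul_le_mul_of_nonneg_right k1 (by linarith)
      _ = (R-r)^n * (2*r) * 2^n := by ring
      _ ≤ ((R+r)^N - (R-r)^N) * 2^n := by
          apply mul_le_mul_of_nonneg_right k2 (by positivity)
      _ ≤ (S.card : ℝ) * (3*r)^N * 2^n := by
          apply mul_le_mul_of_nonneg_right hkey0 (by positivity)
  have e2 : (6:ℝ)^N = 2^n * 3^n * 6 := by
    rw [hNn, pow_succ, ← mul_pow]; norm_num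
  have e3 : ((3:ℝ)*r)^N = 3^n * r^n * (3*r) := by rw [e1, mul_pow]
  rw [div_pow, div_mul_div_comm,
    div_le_iff₀ (mul_pos (pow_pos (by norm_num : (0:ℝ) < 6) N) (pow_pos hr n))]
  refine le_of_mul_le_mul_right ?_ hr
  rw [e2] at *
  rw [e3] at key
  ring_nf
  ring_nf at key
  linarith


/-- For radial functions, the `L^p` mass of an annulus dominates
`(|x₀|/r)^{N−1}` times the mass of a ball centered at `x₀`. -/
theorem radial_annulus_lower_bound
    (N : ℕ) (hN : 2 ≤ N) :
    ∃ C : ℝ, 0 < C ∧ ∀ p : ℝ, 1 ≤ p →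
      ∀ f : RN N → ℂ, IsRadial f → MemLp f (ENNReal.ofReal p) volume →
        ∀ (x₀ : RN N) (r : ℝ), 0 < r → 2*r ≤ ‖x₀‖ →
          C * (‖x₀‖ / r) ^ ((N:ℝ) - 1) *
              (∫ x in Metric.closedBall x₀ r, ‖f x‖ ^ p) ≤
            ∫ x in {x : RN N | ‖x₀‖ - r ≤ ‖x‖ ∧ ‖x‖ ≤ ‖x₀‖ + r}, ‖f x‖ ^ p := by
  classical
  haveI := rn_nontrivial' hN
  refine ⟨4/6^N, by positivity, ?_⟩
  intro p hp f hrad hmem x₀ r hr hx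
  set R := ‖x₀‖ with hRdef
  have hR : 0 < R := lt_of_lt_of_le (by linarith) hx
  set g : RN N → ℝ := fun x => ‖f x‖ ^ p with hg
  have hg0 : ∀ x, 0 ≤ g x := fun x => Real.rpow_nonneg (norm_nonneg _) p
  have hgrad : ∀ x y : RN N, ‖x‖ = ‖y‖ → g x = g y := fun x y h => by
    simp only [hg, hrad x y h]
  have hint : Integrable g := by
    have h1 := hmem.integrable_norm_rpow (p := ENNReal.ofReal p)
      (by simp only [ne_eq, ENNReal.ofReal_eq_zero, not_le]; linarith) ENNReal.ofReal_ne_top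
    rwa [ENNReal.toReal_ofReal (by linarith)] at h1
  obtain ⟨S, hSsph, hSsep, hScard⟩ := exists_net hN R r hr hx
  set A : Set (RN N) := {x : RN N | R - r ≤ ‖x‖ ∧ ‖x‖ ≤ R + r} with hA
  have hball_sub : ∀ x ∈ S, ball x r ⊆ A := by
    intro x hxS z hz
    have hxR : ‖x‖ = R := mem_sphere_zero_iff_norm.1 (hSsph hxS)
    have h1 : ‖z - x‖ < r := by rw [← dist_eq_norm]; exact mem_ball.1 hz
    have h2 : |‖z‖ - ‖x‖| ≤ ‖z - x‖ := abs_norm_sub_norm_le z x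
    rw [abs_le] at h2
    exact ⟨by linarith [h2.1], by linarith [h2.2]⟩
  have hdisj : (↑S : Set (RN N)).Pairwise (Function.onFun Disjoint fun x => ball x r) := by
    intro a ha b hb hab
    exact ball_disjoint_ball (by have := hSsep ha hb hab; linarith)
  have hrot : ∀ x ∈ S, ∫ y in ball x r, g y = ∫ y in closedBall x₀ r, g y := by
    intro x hxS
    exact rot_ball_integral hN g hgrad x₀ x
      ((mem_sphere_zero_iff_norm.1 (hSsph hxS)).trans hRdef) r
  have hI0 : 0 ≤ ∫ y in closedBall x₀ r, g y :=
    setIntegral_nonneg measurableSet_closedBall (fun y _ => hg0 y)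
  have hrpow : (R / r) ^ ((N:ℝ) - 1) = (R / r) ^ (N - 1 : ℕ) := by
    rw [← Real.rpow_natCast (R/r) (N-1)]
    congr 1
    push_cast [Nat.cast_sub (by omega : 1 ≤ N)]
    ring
  calc (4/6^N : ℝ) * (R / r) ^ ((N:ℝ) - 1) * (∫ x in closedBall x₀ r, g x)
      = (4/6^N : ℝ) * (R / r) ^ (N - 1 : ℕ) * (∫ x in closedBall x₀ r, g x) := by
        rw [hrpow]
    _ ≤ (S.card : ℝ) * (∫ x in closedBall x₀ r, g x) :=
        mul_le_mul_of_nonneg_right hScard hI0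
    _ = ∑ x ∈ S, ∫ y in ball x r, g y := by
        rw [Finset.sum_congr rfl hrot, Finset.sum_const, nsmul_eq_mul]
    _ = ∫ y in (⋃ x ∈ S, ball x r), g y :=
        (integral_biUnion_finset S (fun _ _ => measurableSet_ball) hdisj
          (fun _ _ => hint.integrableOn)).symm
    _ ≤ ∫ y in A, g y := by
        refine setIntegral_mono_set hint.integrableOn ?_ ?_
        · exact Filter.Eventually.of_forall hg0
        · exact HasSubset.Subset.eventuallyLE (iUnion₂_subset hball_sub)


end
end
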